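/- Let S be a nonempty set, A a nonempty finite set, d and l positive integers, and let φ : S × A → ℝ^d satisfy ‖φ(s,a)‖₂ ≤ 1 for all (s,a). Let H > 0, β ≥ 0, B > 0 and ε > 0. Let 𝒱 be the set of all functions V : S → ℝ of the form V(s) = max_{a ∈ A} min_{1 ≤ i ≤ l} min{ H, ⟨w_i, φ(s,a)⟩ + β·√(φ(s,a)ᵀ Σ_i^{−1} φ(s,a)) }, where w₁, …, w_l ∈ ℝ^d satisfy ‖w_i‖₂ ≤ B and Σ₁, …, Σ_l are symmetric d×d matrices with Σ_i ⪰ I_d. Then there exists a finite set C of functions from S to ℝ such that every V ∈ 𝒱 has some V' ∈ C with sup_{s ∈ S} |V(s) − V'(s)| ≤ ε, and log |C| ≤ d·l·log(1 + 4B/ε) + d²·l·log(1 + 8√d·β²/ε²). -/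

import Mathlib

open Matrix Finset

open Metric MeasureTheory Finset Module
open scoped ENNReal

section Net
variable {ι : Type*} [Fintype ι] [Nonempty ι]

lemma sep_card_bound {R δ : ℝ} (hR : 0 ≤ R) (hδ : 0 < δ) (T : Finset (EuclideanSpace ℝ ι))
    (hT : ∀ x ∈ T, ‖x‖ ≤ R)
    (hsep : (T : Set (EuclideanSpace ℝ ι)).Pairwise fun x y => δ ≤ dist x y) :
    (T.card : ℝ) ≤ (1 + 2 * R / δ) ^ (Fintype.card ι) := by
  classical
  set n := Fintype.card ι with hn
  have hfr : finrank ℝ (EuclideanSpace ℝ ι) = n := finrank_euclideanSpace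
  set μ : Measure (EuclideanSpace ℝ ι) := volume with hμ
  have hdisj : (T : Set (EuclideanSpace ℝ ι)).PairwiseDisjoint
      (fun x => ball x (δ / 2)) := fun x hx y hy hxy =>
    ball_disjoint_ball (by linarith [hsep hx hy hxy])
  have hsum : ∑ x ∈ T, μ (ball x (δ / 2)) = μ (⋃ x ∈ T, ball x (δ / 2)) :=
    (measure_biUnion_finset hdisj fun x _ => measurableSet_ball).symm
  have hsub : (⋃ x ∈ T, ball x (δ / 2)) ⊆ closedBall (0 : EuclideanSpace ℝ ι) (R + δ / 2) := by
    intro y hy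
    simp only [Set.mem_iUnion] at hy
    obtain ⟨x, hx, hyx⟩ := hy
    have := hT x hx
    simp only [mem_ball] at hyx
    simp only [mem_closedBall, dist_zero_right]
    have h1 : ‖y‖ ≤ ‖y - x‖ + ‖x‖ := by
      simpa using norm_add_le (y - x) x
    rw [← dist_eq_norm] at h1
    linarith
  have hball : ∀ x : EuclideanSpace ℝ ι, μ (ball x (δ / 2)) =
      ENNReal.ofReal ((δ / 2) ^ n) * μ (ball 0 1) := fun x => by
    rw [Measure.addHaar_ball μ x (by linarith), hfr]
  have hcb : μ (closedBall (0 : EuclideanSpace ℝ ι) (R + δ / 2)) =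
      ENNReal.ofReal ((R + δ / 2) ^ n) * μ (ball 0 1) := by
    rw [Measure.addHaar_closedBall μ _ (by linarith), hfr]
  have key : (T.card : ℝ≥0∞) * ENNReal.ofReal ((δ / 2) ^ n) ≤
      ENNReal.ofReal ((R + δ / 2) ^ n) := by
    have h1 : (T.card : ℝ≥0∞) * (ENNReal.ofReal ((δ / 2) ^ n) * μ (ball 0 1)) ≤
        ENNReal.ofReal ((R + δ / 2) ^ n) * μ (ball 0 1) := by
      rw [← hcb]
      calc (T.card : ℝ≥0∞) * (ENNReal.ofReal ((δ / 2) ^ n) * μ (ball 0 1))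
          = ∑ x ∈ T, μ (ball x (δ / 2)) := by
            simp [hball, Finset.sum_const, nsmul_eq_mul]
        _ = μ (⋃ x ∈ T, ball x (δ / 2)) := hsum
        _ ≤ _ := measure_mono hsub
    have hpos : μ (ball (0 : EuclideanSpace ℝ ι) 1) ≠ 0 :=
      (measure_ball_pos μ _ one_pos).ne'
    have hfin : μ (ball (0 : EuclideanSpace ℝ ι) 1) ≠ ⊤ := measure_ball_lt_top.ne
    rw [← mul_assoc] at h1
    exact (ENNReal.mul_le_mul_iff_left hpos hfin).mp h1
  have hδn : 0 < (δ / 2) ^ n := by positivity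
  have key2 : (T.card : ℝ) * (δ / 2) ^ n ≤ (R + δ / 2) ^ n := by
    have := key
    rw [← ENNReal.ofReal_natCast, ← ENNReal.ofReal_mul (by positivity)] at this
    exact (ENNReal.ofReal_le_ofReal_iff (by positivity)).mp this
  have heq : (R + δ / 2) / (δ / 2) = 1 + 2 * R / δ := by
    field_simp; ring
  calc (T.card : ℝ) ≤ (R + δ / 2) ^ n / (δ / 2) ^ n := by
        rw [le_div_iff₀ hδn]; exact key2
    _ = ((R + δ / 2) / (δ / 2)) ^ n := (div_pow _ _ _).symm
    _ = (1 + 2 * R / δ) ^ n := by rw [heq]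

lemma euclidean_net {R δ : ℝ} (hR : 0 ≤ R) (hδ : 0 < δ) :
    ∃ T : Finset (EuclideanSpace ℝ ι),
      (∀ x : EuclideanSpace ℝ ι, ‖x‖ ≤ R → ∃ y ∈ T, dist x y ≤ δ) ∧
      (T.card : ℝ) ≤ (1 + 2 * R / δ) ^ (Fintype.card ι) := by
  classical
  set P : Finset (EuclideanSpace ℝ ι) → Prop := fun T =>
    (∀ x ∈ T, ‖x‖ ≤ R) ∧ (T : Set (EuclideanSpace ℝ ι)).Pairwise fun x y => δ ≤ dist x y
    with hP
  have hbd : ∀ T, P T → T.card ≤ Nat.floor ((1 + 2 * R / δ) ^ (Fintype.card ι)) := by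
    intro T hT
    exact Nat.le_floor (sep_card_bound hR hδ T hT.1 hT.2)
  set 𝒮 : Set ℕ := {m | ∃ T, P T ∧ T.card = m} with h𝒮
  have h0 : 0 ∈ 𝒮 := ⟨∅, ⟨by simp, by simp⟩, rfl⟩
  have hBdd : BddAbove 𝒮 := ⟨Nat.floor ((1 + 2 * R / δ) ^ (Fintype.card ι)),
    fun m ⟨T, hT, hTm⟩ => hTm ▸ hbd T hT⟩
  obtain ⟨T, hT, hTcard⟩ := Nat.sSup_mem ⟨0, h0⟩ hBdd
  refine ⟨T, ?_, le_trans (Nat.cast_le.mpr (hbd T hT)) (Nat.floor_le (by positivity))⟩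
  intro x hx
  by_contra hcon
  push_neg at hcon
  have hxT : x ∉ T := fun hxT => by
    have := hcon x hxT
    simp at this
    linarith
  have hP' : P (insert x T) := by
    constructor
    · intro y hy
      rcases Finset.mem_insert.mp hy with rfl | hy
      · exact hx
      · exact hT.1 y hy
    · intro a ha b hb hab
      simp only [Finset.coe_insert, Set.mem_insert_iff] at ha hb
      rcases ha with rfl | ha
      · rcases hb with rfl | hb
        · exact absurd rfl hab
        · exact le_of_lt (hcon b hb)
      · rcases hb with rfl | hb
        · rw [dist_comm]; exact le_of_lt (hcon a ha)
        · exact hT.2 ha hb hab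
  have : (insert x T).card ∈ 𝒮 := ⟨_, hP', rfl⟩
  have hle := le_csSup hBdd this
  rw [Finset.card_insert_of_notMem hxT, hTcard] at hle
  omega

end Net

section Helpers
open Matrix

lemma real_isHermitian_of_isSymm {n : Type*} {A : Matrix n n ℝ} (h : A.IsSymm) :
    A.IsHermitian := by
  rwa [Matrix.IsHermitian, conjTranspose_eq_transpose_of_trivial]

variable {d : ℕ}

lemma dot_sq_le (x y : Fin d → ℝ) : (x ⬝ᵥ y) ^ 2 ≤ (x ⬝ᵥ x) * (y ⬝ᵥ y) := by
  have := Finset.sum_mul_sq_le_sq_mul_sq Finset.univ x y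
  simpa [dotProduct, sq] using this

lemma dot_self_nonneg (x : Fin d → ℝ) : 0 ≤ x ⬝ᵥ x :=
  Finset.sum_nonneg fun i _ => mul_self_nonneg _

lemma abs_dot_le (x y : Fin d → ℝ) :
    |x ⬝ᵥ y| ≤ Real.sqrt (x ⬝ᵥ x) * Real.sqrt (y ⬝ᵥ y) := by
  rw [← Real.sqrt_sq_eq_abs, ← Real.sqrt_mul (dot_self_nonneg x)]
  exact Real.sqrt_le_sqrt (dot_sq_le x y)

/-- Quadratic form bound by the Frobenius norm. -/
lemma abs_quadform_le (N : Matrix (Fin d) (Fin d) ℝ) (x : Fin d → ℝ) (hx : x ⬝ᵥ x ≤ 1) :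
    |x ⬝ᵥ N *ᵥ x| ≤ Real.sqrt (∑ p : Fin d × Fin d, N p.1 p.2 ^ 2) := by
  have hxx := dot_self_nonneg x
  have hF : (N *ᵥ x) ⬝ᵥ (N *ᵥ x) ≤ (∑ p : Fin d × Fin d, N p.1 p.2 ^ 2) * (x ⬝ᵥ x) := by
    rw [Fintype.sum_prod_type, Finset.sum_mul]
    refine Finset.sum_le_sum fun i _ => ?_
    have := Finset.sum_mul_sq_le_sq_mul_sq Finset.univ (N i) x
    calc (N *ᵥ x) i * (N *ᵥ x) i = (∑ j, N i j * x j) ^ 2 := by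
          simp [Matrix.mulVec, dotProduct, sq]
      _ ≤ (∑ j, N i j ^ 2) * ∑ j, x j ^ 2 := this
      _ = (∑ j, N i j ^ 2) * (x ⬝ᵥ x) := by simp [dotProduct, sq]
  have hsq : (x ⬝ᵥ N *ᵥ x) ^ 2 ≤ ∑ p : Fin d × Fin d, N p.1 p.2 ^ 2 := by
    have h1 := dot_sq_le x (N *ᵥ x)
    have hFnn : (0:ℝ) ≤ ∑ p : Fin d × Fin d, N p.1 p.2 ^ 2 :=
      Finset.sum_nonneg fun _ _ => sq_nonneg _
    nlinarith [dot_self_nonneg (N *ᵥ x)]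
  calc |x ⬝ᵥ N *ᵥ x| = Real.sqrt ((x ⬝ᵥ N *ᵥ x) ^ 2) := (Real.sqrt_sq_eq_abs _).symm
    _ ≤ _ := Real.sqrt_le_sqrt hsq

lemma sqrt_abs_sub (a b : ℝ) (ha : 0 ≤ a) (hb : 0 ≤ b) :
    |Real.sqrt a - Real.sqrt b| ≤ Real.sqrt |a - b| := by
  wlog h : b ≤ a generalizing a b
  · rw [abs_sub_comm, abs_sub_comm a b]; exact this b a hb ha (le_of_not_ge h)
  rw [abs_of_nonneg (sub_nonneg.mpr (Real.sqrt_le_sqrt h)), abs_of_nonneg (by linarith),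
    sub_le_iff_le_add]
  have key : a ≤ (Real.sqrt (a - b) + Real.sqrt b) ^ 2 := by
    have h1 : Real.sqrt (a - b) ^ 2 = a - b := Real.sq_sqrt (by linarith)
    have h2 : Real.sqrt b ^ 2 = b := Real.sq_sqrt hb
    have h3 : 0 ≤ Real.sqrt (a-b) * Real.sqrt b := by positivity
    nlinarith
  calc Real.sqrt a ≤ Real.sqrt ((Real.sqrt (a - b) + Real.sqrt b) ^ 2) := Real.sqrt_le_sqrt key
    _ = |Real.sqrt (a-b) + Real.sqrt b| := Real.sqrt_sq_eq_abs _
    _ = Real.sqrt (a-b) + Real.sqrt b := abs_of_nonneg (by positivity)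

lemma abs_min_sub_min (c a b : ℝ) : |min c a - min c b| ≤ |a - b| := by
  rcases le_total a b with h | h <;> rcases le_total c a with h1 | h1 <;>
    rcases le_total c b with h2 | h2 <;>
    simp [min_eq_left, min_eq_right, h1, h2, abs_le] <;> constructor <;> linarith [abs_nonneg (a-b), le_abs_self (a-b), neg_abs_le (a-b)]

end Helpers

section MatrixFacts
open Matrix
variable {d : ℕ}

lemma gamma_facts {Γ : Matrix (Fin d) (Fin d) ℝ} (hs : Γ.IsSymm)
    (hp : (Γ - 1).PosSemidef) :
    (Γ⁻¹).IsSymm ∧ (∀ x : Fin d → ℝ,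
      (Γ⁻¹ *ᵥ x) ⬝ᵥ (Γ⁻¹ *ᵥ x) ≤ x ⬝ᵥ Γ⁻¹ *ᵥ x ∧ x ⬝ᵥ Γ⁻¹ *ᵥ x ≤ x ⬝ᵥ x) ∧
      (∑ p : Fin d × Fin d, (Γ⁻¹ p.1 p.2) ^ 2) ≤ (d : ℝ) := by
  have hform : ∀ z : Fin d → ℝ, z ⬝ᵥ z ≤ z ⬝ᵥ Γ *ᵥ z := by
    intro z
    have := hp.dotProduct_mulVec_nonneg z
    simp only [star_trivial, sub_mulVec, one_mulVec, dotProduct_sub] at this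
    linarith
  have hpd : Γ.PosDef := by
    refine Matrix.PosDef.of_dotProduct_mulVec_pos (real_isHermitian_of_isSymm hs) fun x hx => ?_
    have h1 : 0 < x ⬝ᵥ x := lt_of_le_of_ne (dot_self_nonneg x)
      (fun h => hx (dotProduct_self_eq_zero.mp h.symm))
    simpa using lt_of_lt_of_le h1 (hform x)
  have hdet : IsUnit Γ.det := (Matrix.isUnit_iff_isUnit_det Γ).mp hpd.isUnit
  have hmul : Γ * Γ⁻¹ = 1 := Matrix.mul_nonsing_inv Γ hdet
  have hMsymm : (Γ⁻¹).IsSymm := by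
    rw [Matrix.IsSymm, Matrix.transpose_nonsing_inv, hs.eq]
  set M := Γ⁻¹ with hM
  have hkey : ∀ x : Fin d → ℝ, (M *ᵥ x) ⬝ᵥ (M *ᵥ x) ≤ x ⬝ᵥ M *ᵥ x := by
    intro x
    have h1 := hform (M *ᵥ x)
    have h2 : Γ *ᵥ (M *ᵥ x) = x := by
      rw [Matrix.mulVec_mulVec, hmul, Matrix.one_mulVec]
    rw [h2] at h1
    rwa [dotProduct_comm (M *ᵥ x) x] at h1
  have hle1 : ∀ x : Fin d → ℝ, x ⬝ᵥ M *ᵥ x ≤ x ⬝ᵥ x := by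
    intro x
    have hnn : 0 ≤ x ⬝ᵥ M *ᵥ x := le_trans (dot_self_nonneg _) (hkey x)
    rcases eq_or_lt_of_le hnn with h0 | h0
    · rw [← h0]; exact dot_self_nonneg x
    have hcs := dot_sq_le x (M *ᵥ x)
    have h3 := hkey x
    have h4 := dot_self_nonneg x
    nlinarith [mul_le_mul_of_nonneg_left h3 h4]
  refine ⟨hMsymm, fun x => ⟨hkey x, hle1 x⟩, ?_⟩
  have hcol : ∀ i : Fin d, ∑ j, (M j i) ^ 2 ≤ M i i := by
    intro i
    have h1 := hkey (Pi.single i 1)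
    have h2 : M *ᵥ Pi.single i 1 = fun j => M j i := by
      funext j
      simp [Matrix.mulVec_single]
    rw [h2] at h1
    simpa [dotProduct, sq, Pi.single_apply, Finset.sum_ite_eq'] using h1
  have hdiag : ∀ i : Fin d, M i i ≤ 1 := by
    intro i
    have h1 := hle1 (Pi.single i 1)
    simpa [Matrix.mulVec_single, dotProduct, Pi.single_apply, Finset.sum_ite_eq'] using h1
  calc (∑ p : Fin d × Fin d, (M p.1 p.2) ^ 2)
      = ∑ i, ∑ j, (M j i) ^ 2 := by
        rw [Fintype.sum_prod_type]
        exact Finset.sum_comm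
    _ ≤ ∑ i, M i i := Finset.sum_le_sum fun i _ => hcol i
    _ ≤ ∑ _i : Fin d, (1:ℝ) := Finset.sum_le_sum fun i _ => hdiag i
    _ = d := by simp

end MatrixFacts

section SupInf
variable {α : Type*} [Fintype α] [Nonempty α]

lemma abs_ciSup_sub_ciSup {f g : α → ℝ} {c : ℝ} (h : ∀ a, |f a - g a| ≤ c) :
    |(⨆ a, f a) - ⨆ a, g a| ≤ c := by
  have key : ∀ f g : α → ℝ, (∀ a, |f a - g a| ≤ c) → (⨆ a, f a) - (⨆ a, g a) ≤ c := by
    intro f g h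
    rw [sub_le_iff_le_add]
    refine ciSup_le fun a => ?_
    have h1 : g a ≤ ⨆ a, g a := le_ciSup (Set.Finite.bddAbove (Set.finite_range g)) a
    have h2 := abs_le.mp (h a)
    linarith [h2.2]
  rw [abs_le]
  constructor
  · linarith [key g f (fun a => by rw [abs_sub_comm]; exact h a)]
  · exact key f g h

lemma abs_ciInf_sub_ciInf {f g : α → ℝ} {c : ℝ} (h : ∀ a, |f a - g a| ≤ c) :
    |(⨅ a, f a) - ⨅ a, g a| ≤ c := by
  have key : ∀ f g : α → ℝ, (∀ a, |f a - g a| ≤ c) → (⨅ a, f a) - (⨅ a, g a) ≤ c := by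
    intro f g h
    have key2 : (⨅ a, f a) - c ≤ ⨅ a, g a := by
      refine le_ciInf fun a => ?_
      have h1 : (⨅ a, f a) ≤ f a := ciInf_le (Set.Finite.bddBelow (Set.finite_range f)) a
      have h2 := abs_le.mp (h a)
      linarith [h2.2]
    linarith
  rw [abs_le]
  constructor
  · linarith [key g f (fun a => by rw [abs_sub_comm]; exact h a)]
  · exact key f g h

lemma abs_ciSup_ciInf {ι' : Type*} [Fintype ι'] [Nonempty ι']
    {F G : α → ι' → ℝ} {c : ℝ} (h : ∀ a i, |F a i - G a i| ≤ c) :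
    |(⨆ a, ⨅ i, F a i) - ⨆ a, ⨅ i, G a i| ≤ c :=
  abs_ciSup_sub_ciSup fun a => abs_ciInf_sub_ciInf (h a)

end SupInf

lemma abs_sub_max_zero {t r : ℝ} (ht : 0 ≤ t) : |t - max 0 r| ≤ |t - r| := by
  rcases le_total 0 r with h | h
  · rw [max_eq_right h]
  · rw [max_eq_left h, sub_zero, abs_of_nonneg ht, abs_of_nonneg (by linarith)]
    linarith

section Eucl
open Matrix
variable {ι : Type*} [Fintype ι]

lemma norm_symm_eq (v : ι → ℝ) :
    ‖((WithLp.equiv 2 (ι → ℝ)).symm v : EuclideanSpace ℝ ι)‖ = Real.sqrt (v ⬝ᵥ v) := by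
  rw [EuclideanSpace.norm_eq]
  congr 1
  simp [dotProduct, sq, Real.norm_eq_abs, abs_mul_abs_self]

lemma dist_eq_dot (x y : EuclideanSpace ℝ ι) :
    dist x y = Real.sqrt ((fun i => x i - y i) ⬝ᵥ fun i => x i - y i) := by
  rw [EuclideanSpace.dist_eq]
  congr 1
  simp [dotProduct, sq, Real.dist_eq, abs_mul_abs_self]

end Eucl

open Matrix Finset

/-- Covering number bound for the class of max-min truncated optimistic value
functions: there is an `ε`-cover `C` (w.r.t. the sup distance) with
`log |C| ≤ d l log(1 + 4B/ε) + d² l log(1 + 8√d β²/ε²)`. -/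
theorem value_class_covering_number
    {S : Type*} [Nonempty S] {A : Type*} [Fintype A] [Nonempty A]
    (d l : ℕ) (hd : 0 < d) (hl : 0 < l)
    (φ : S → A → Fin d → ℝ) (hφ : ∀ s a, Real.sqrt (φ s a ⬝ᵥ φ s a) ≤ 1)
    (H β B ε : ℝ) (hH : 0 < H) (hβ : 0 ≤ β) (hB : 0 < B) (hε : 0 < ε)
    (𝒱 : Set (S → ℝ))
    (h𝒱 : 𝒱 = {V | ∃ w : Fin l → Fin d → ℝ, ∃ Γ : Fin l → Matrix (Fin d) (Fin d) ℝ,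
      (∀ i, Real.sqrt (w i ⬝ᵥ w i) ≤ B) ∧
      (∀ i, (Γ i).IsSymm ∧ (Γ i - 1).PosSemidef) ∧
      ∀ s, V s = ⨆ a : A, ⨅ i : Fin l,
        min H (w i ⬝ᵥ φ s a
          + β * Real.sqrt (φ s a ⬝ᵥ ((Γ i)⁻¹).mulVec (φ s a)))}) :
    ∃ C : Finset (S → ℝ),
      (∀ V ∈ 𝒱, ∃ V' ∈ C, ∀ s, |V s - V' s| ≤ ε) ∧
      Real.log C.card ≤ d * l * Real.log (1 + 4 * B / ε)
        + d ^ 2 * l * Real.log (1 + 8 * Real.sqrt d * β ^ 2 / ε ^ 2) := by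
  classical
  haveI : Nonempty (Fin d) := ⟨⟨0, hd⟩⟩
  haveI : Nonempty (Fin l) := ⟨⟨0, hl⟩⟩
  set e1 := WithLp.equiv 2 (Fin d → ℝ) with he1
  set e2 := WithLp.equiv 2 (Fin d × Fin d → ℝ) with he2
  -- nets
  obtain ⟨Tw, hTw, hTwcard⟩ := euclidean_net (ι := Fin d) (R := B) (δ := ε / 2)
    hB.le (by positivity)
  obtain ⟨Tm, hTm, hTmcard⟩ := euclidean_net (ι := Fin d × Fin d)
    (R := β ^ 2 * Real.sqrt d) (δ := ε ^ 2 / 4) (by positivity) (by positivity)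
  -- the candidate functions
  set G : (Fin l → EuclideanSpace ℝ (Fin d)) × (Fin l → EuclideanSpace ℝ (Fin d × Fin d))
      → (S → ℝ) := fun p s => ⨆ a : A, ⨅ i : Fin l,
        min H ((fun j => p.1 i j) ⬝ᵥ φ s a +
          Real.sqrt (max 0 (φ s a ⬝ᵥ (Matrix.of fun q r => p.2 i (q, r)) *ᵥ φ s a))) with hG
  set C : Finset (S → ℝ) := Finset.image G
    ((Fintype.piFinset fun _ : Fin l => Tw) ×ˢ (Fintype.piFinset fun _ : Fin l => Tm)) with hC
  have hTwpos : 0 < Tw.card := by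
    obtain ⟨y, hy, -⟩ := hTw 0 (by simp [hB.le])
    exact Finset.card_pos.mpr ⟨y, hy⟩
  have hTmpos : 0 < Tm.card := by
    obtain ⟨y, hy, -⟩ := hTm 0 (by simp; positivity)
    exact Finset.card_pos.mpr ⟨y, hy⟩
  refine ⟨C, ?_, ?_⟩
  · -- covering property
    intro V hV
    rw [h𝒱] at hV
    obtain ⟨w, Γ, hw, hΓ, hVs⟩ := hV
    have hfacts := fun i => gamma_facts (hΓ i).1 (hΓ i).2
    set N : Fin l → Matrix (Fin d) (Fin d) ℝ := fun i => (Γ i)⁻¹ with hN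
    have hφ2 : ∀ s a, φ s a ⬝ᵥ φ s a ≤ 1 := by
      intro s a
      have h := hφ s a
      have h0 := dot_self_nonneg (φ s a)
      nlinarith [Real.sq_sqrt h0, Real.sqrt_nonneg (φ s a ⬝ᵥ φ s a)]
    -- choose net points for the weights
    have hwE : ∀ i, ‖(e1.symm (w i) : EuclideanSpace ℝ (Fin d))‖ ≤ B := by
      intro i
      rw [he1, norm_symm_eq]
      exact hw i
    choose u hu hud using fun i => hTw (e1.symm (w i)) (hwE i)
    -- choose net points for the matrices
    set mv : Fin l → (Fin d × Fin d → ℝ) := fun i p => β ^ 2 * N i p.1 p.2 with hmv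
    have hmE : ∀ i, ‖(e2.symm (mv i) : EuclideanSpace ℝ (Fin d × Fin d))‖
        ≤ β ^ 2 * Real.sqrt d := by
      intro i
      rw [he2, norm_symm_eq]
      have hsum : mv i ⬝ᵥ mv i = β ^ 4 * ∑ p : Fin d × Fin d, (N i p.1 p.2) ^ 2 := by
        simp only [dotProduct, hmv, Finset.mul_sum]
        congr 1; funext p; ring
      rw [hsum]
      have hfrob := (hfacts i).2.2
      calc Real.sqrt (β ^ 4 * ∑ p : Fin d × Fin d, (N i p.1 p.2) ^ 2)
          ≤ Real.sqrt (β ^ 4 * d) := Real.sqrt_le_sqrt (by nlinarith [pow_nonneg hβ 4])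
        _ = β ^ 2 * Real.sqrt d := by
            rw [Real.sqrt_mul (by positivity), show (β:ℝ)^4 = (β^2)^2 by ring,
              Real.sqrt_sq (by positivity)]
    choose m hm hmd using fun i => hTm (e2.symm (mv i)) (hmE i)
    refine ⟨G (u, m), Finset.mem_image_of_mem _ ?_, ?_⟩
    · rw [Finset.mem_product]
      exact ⟨Fintype.mem_piFinset.mpr hu, Fintype.mem_piFinset.mpr hm⟩
    intro s
    rw [hVs s]
    simp only [hG]
    refine abs_ciSup_ciInf fun a i => ?_
    refine le_trans (abs_min_sub_min H _ _) ?_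
    set v := φ s a with hv
    have hvv : v ⬝ᵥ v ≤ 1 := hφ2 s a
    have hq0 : 0 ≤ v ⬝ᵥ N i *ᵥ v := le_trans (dot_self_nonneg _) ((hfacts i).2.1 v).1
    -- first term
    have hterm1 : |w i ⬝ᵥ v - (fun j => u i j) ⬝ᵥ v| ≤ ε / 2 := by
      rw [← sub_dotProduct]
      refine le_trans (abs_dot_le _ _) ?_
      have hd1 : Real.sqrt ((w i - fun j => u i j) ⬝ᵥ (w i - fun j => u i j))
          = dist (e1.symm (w i)) (u i) := by
        rw [dist_eq_dot]
        congr 1 <;> funext j <;> simp [he1]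
      calc Real.sqrt ((w i - fun j => u i j) ⬝ᵥ (w i - fun j => u i j)) * Real.sqrt (v ⬝ᵥ v)
          ≤ (ε / 2) * 1 := by
            refine mul_le_mul ?_ (hφ s a) (Real.sqrt_nonneg _) (by positivity)
            rw [hd1]; exact hud i
        _ = ε / 2 := by ring
    -- second term
    set q : ℝ := v ⬝ᵥ N i *ᵥ v with hq
    set M' : Matrix (Fin d) (Fin d) ℝ := Matrix.of fun q' r => m i (q', r) with hM'
    have hβq : β * Real.sqrt q = Real.sqrt (β ^ 2 * q) := by
      rw [Real.sqrt_mul (sq_nonneg β), Real.sqrt_sq hβ]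
    have hquad : β ^ 2 * q - v ⬝ᵥ M' *ᵥ v = v ⬝ᵥ ((β ^ 2 • N i) - M') *ᵥ v := by
      rw [Matrix.sub_mulVec, dotProduct_sub, Matrix.smul_mulVec,
        dotProduct_smul]
      simp [hq, smul_eq_mul]
    have hDsum : Real.sqrt (∑ p : Fin d × Fin d, ((β ^ 2 • N i - M') p.1 p.2) ^ 2)
        = dist (e2.symm (mv i)) (m i) := by
      rw [dist_eq_dot]
      congr 1
      simp [dotProduct, he2, hmv, hM', Matrix.sub_apply, Matrix.smul_apply,
        smul_eq_mul, sq]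
    have hquadbound : |β ^ 2 * q - v ⬝ᵥ M' *ᵥ v| ≤ ε ^ 2 / 4 := by
      rw [hquad]
      refine le_trans (abs_quadform_le _ _ hvv) ?_
      rw [hDsum]
      exact hmd i
    have hterm2 : |β * Real.sqrt q - Real.sqrt (max 0 (v ⬝ᵥ M' *ᵥ v))| ≤ ε / 2 := by
      rw [hβq]
      refine le_trans (sqrt_abs_sub _ _ (by positivity) (le_max_left _ _)) ?_
      have h1 : |β ^ 2 * q - max 0 (v ⬝ᵥ M' *ᵥ v)| ≤ ε ^ 2 / 4 :=
        le_trans (abs_sub_max_zero (by positivity)) hquadbound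
      calc Real.sqrt |β ^ 2 * q - max 0 (v ⬝ᵥ M' *ᵥ v)| ≤ Real.sqrt (ε ^ 2 / 4) :=
            Real.sqrt_le_sqrt h1
        _ = ε / 2 := by
            rw [show ε ^ 2 / 4 = (ε / 2) ^ 2 by ring, Real.sqrt_sq (by positivity)]
    calc |(w i ⬝ᵥ v + β * Real.sqrt q) -
          ((fun j => u i j) ⬝ᵥ v + Real.sqrt (max 0 (v ⬝ᵥ M' *ᵥ v)))|
        ≤ |w i ⬝ᵥ v - (fun j => u i j) ⬝ᵥ v|
          + |β * Real.sqrt q - Real.sqrt (max 0 (v ⬝ᵥ M' *ᵥ v))| := by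
          have := abs_add_le (w i ⬝ᵥ v - (fun j => u i j) ⬝ᵥ v)
            (β * Real.sqrt q - Real.sqrt (max 0 (v ⬝ᵥ M' *ᵥ v)))
          calc _ = |(w i ⬝ᵥ v - (fun j => u i j) ⬝ᵥ v)
              + (β * Real.sqrt q - Real.sqrt (max 0 (v ⬝ᵥ M' *ᵥ v)))| := by ring_nf
            _ ≤ _ := this
      _ ≤ ε / 2 + ε / 2 := add_le_add hterm1 hterm2
      _ = ε := by ring
  · -- cardinality bound
    have hCne : C.Nonempty := by
      refine Finset.image_nonempty.mpr ?_
      refine Finset.Nonempty.product ?_ ?_ <;>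
        exact Fintype.piFinset_nonempty.mpr fun _ => Finset.card_pos.mp (by assumption)
    have hCpos : (0 : ℝ) < C.card := by exact_mod_cast Finset.card_pos.mpr hCne
    have hCcard : (C.card : ℝ) ≤ (Tw.card : ℝ) ^ l * (Tm.card : ℝ) ^ l := by
      have h1 := Finset.card_image_le (s := (Fintype.piFinset fun _ : Fin l => Tw) ×ˢ
        (Fintype.piFinset fun _ : Fin l => Tm)) (f := G)
      rw [Finset.card_product] at h1
      have h2 : (Fintype.piFinset fun _ : Fin l => Tw).card = Tw.card ^ l := by
        simp [Fintype.card_piFinset]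
      have h3 : (Fintype.piFinset fun _ : Fin l => Tm).card = Tm.card ^ l := by
        simp [Fintype.card_piFinset]
      rw [h2, h3] at h1
      exact_mod_cast h1
    have hK1eq : 1 + 2 * B / (ε / 2) = 1 + 4 * B / ε := by field_simp; ring
    have hK2eq : 1 + 2 * (β ^ 2 * Real.sqrt d) / (ε ^ 2 / 4)
        = 1 + 8 * Real.sqrt d * β ^ 2 / ε ^ 2 := by field_simp; ring
    have hK1pos : (1:ℝ) ≤ 1 + 4 * B / ε := by nlinarith [div_nonneg (by linarith : (0:ℝ) ≤ 4*B) hε.le]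
    have hK2pos : (1:ℝ) ≤ 1 + 8 * Real.sqrt d * β ^ 2 / ε ^ 2 := by
      have : (0:ℝ) ≤ 8 * Real.sqrt d * β ^ 2 / ε ^ 2 := by positivity
      linarith
    have hTw1 : (Tw.card : ℝ) ≤ (1 + 4 * B / ε) ^ d := by
      rw [← hK1eq]; simpa using hTwcard
    have hTm1 : (Tm.card : ℝ) ≤ (1 + 8 * Real.sqrt d * β ^ 2 / ε ^ 2) ^ (d ^ 2) := by
      rw [← hK2eq]
      have : Fintype.card (Fin d × Fin d) = d ^ 2 := by simp [sq]
      rw [← this]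
      exact hTmcard
    have hlogw : Real.log (Tw.card : ℝ) ≤ d * Real.log (1 + 4 * B / ε) := by
      calc Real.log (Tw.card : ℝ) ≤ Real.log ((1 + 4 * B / ε) ^ d) :=
            Real.log_le_log (by exact_mod_cast hTwpos) hTw1
        _ = d * Real.log (1 + 4 * B / ε) := by rw [Real.log_pow]
    have hlogm : Real.log (Tm.card : ℝ) ≤ (d ^ 2 : ℕ) *
        Real.log (1 + 8 * Real.sqrt d * β ^ 2 / ε ^ 2) := by
      calc Real.log (Tm.card : ℝ) ≤ Real.log ((1 + 8 * Real.sqrt d * β ^ 2 / ε ^ 2) ^ (d ^ 2)) :=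
            Real.log_le_log (by exact_mod_cast hTmpos) hTm1
        _ = _ := by rw [Real.log_pow]
    have hTwpos' : (0:ℝ) < (Tw.card : ℝ) ^ l := pow_pos (by exact_mod_cast hTwpos) l
    have hTmpos' : (0:ℝ) < (Tm.card : ℝ) ^ l := pow_pos (by exact_mod_cast hTmpos) l
    calc Real.log C.card ≤ Real.log ((Tw.card : ℝ) ^ l * (Tm.card : ℝ) ^ l) :=
          Real.log_le_log hCpos hCcard
      _ = l * Real.log (Tw.card : ℝ) + l * Real.log (Tm.card : ℝ) := by
          rw [Real.log_mul hTwpos'.ne' hTmpos'.ne', Real.log_pow, Real.log_pow]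
      _ ≤ l * (d * Real.log (1 + 4 * B / ε)) + l * ((d ^ 2 : ℕ) *
            Real.log (1 + 8 * Real.sqrt d * β ^ 2 / ε ^ 2)) := by
          have hl0 : (0:ℝ) ≤ l := by positivity
          exact add_le_add (mul_le_mul_of_nonneg_left hlogw hl0)
            (mul_le_mul_of_nonneg_left hlogm hl0)
      _ = d * l * Real.log (1 + 4 * B / ε)
          + d ^ 2 * l * Real.log (1 + 8 * Real.sqrt d * β ^ 2 / ε ^ 2) := by
          push_cast; ring
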